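/- If ‖μ‖ = N, then the class function binom(X,μ) on S_N is the indicator function of the conjugacy class C_μ consisting of permutations with exactly μ_k many k-cycles for every k. -/

import Mathlib

/-- `cycleCount σ k` is the number of `k`-cycles in the cycle decomposition of `σ`
(with `1`-cycles interpreted as fixed points). -/
def cycleCount {α : Type*} [Fintype α] [DecidableEq α] (σ : Equiv.Perm α) (k : ℕ) : ℕ :=
  if k = 1 then (Finset.univ.filter fun x => σ x = x).card else Multiset.count k σ.cycleType

open Finset in
lemma cycleCount_le (N : ℕ) (σ : Equiv.Perm (Fin N)) {k : ℕ} (hk : 1 ≤ k) (hN : N < k) :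
    cycleCount σ k = 0 := by
  unfold cycleCount
  split_ifs with h
  · subst h
    have : N = 0 := by omega
    subst this
    simp
  · refine Multiset.count_eq_zero_of_notMem fun hmem => ?_
    have h2 : k ≤ σ.cycleType.sum := Multiset.le_sum_of_mem hmem -- guess name
    have h3 : σ.cycleType.sum = σ.support.card := Equiv.Perm.sum_cycleType σ
    have h4 : σ.support.card ≤ N := le_trans (Finset.card_le_univ _) (by simp)
    omega

open Finset in
lemma cycleCount_sum (N : ℕ) (σ : Equiv.Perm (Fin N)) :
    ∑ k ∈ Finset.Icc 1 N, k * cycleCount σ k = N := by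
  rcases Nat.eq_zero_or_pos N with rfl | hN
  · simp
  have hs : σ.support.card ≤ N := le_trans (Finset.card_le_univ _) (by simp)
  have h1 : cycleCount σ 1 = N - σ.support.card := by
    unfold cycleCount
    rw [if_pos rfl]
    have := Finset.card_filter_add_card_filter_not (s := (univ : Finset (Fin N)))
      (p := fun x => σ x = x)
    have hsup : (univ.filter fun x => ¬ σ x = x) = σ.support := by
      ext x; simp [Equiv.Perm.mem_support]
    rw [hsup] at this
    simp at this
    omega
  have h2 : ∑ k ∈ Finset.Icc 2 N, k * cycleCount σ k = σ.support.card := by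
    have hsub : σ.cycleType.toFinset ⊆ Finset.Icc 2 N := by
      intro k hk
      rw [Multiset.mem_toFinset] at hk
      have h2 := Equiv.Perm.two_le_of_mem_cycleType hk
      have h3 : k ≤ σ.cycleType.sum := Multiset.le_sum_of_mem hk
      rw [Equiv.Perm.sum_cycleType] at h3
      simp only [Finset.mem_Icc]
      omega
    have key : ∑ k ∈ Finset.Icc 2 N, k * cycleCount σ k
        = ∑ k ∈ σ.cycleType.toFinset, σ.cycleType.count k • k := by
      rw [← Finset.sum_subset hsub (fun k hk hk2 => ?_)]
      · apply Finset.sum_congr rfl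
        intro k hk
        rw [Multiset.mem_toFinset] at hk
        have : k ≠ 1 := by have := Equiv.Perm.two_le_of_mem_cycleType hk; omega
        simp [cycleCount, this, mul_comm]
      · have : k ≠ 1 := by simp only [Finset.mem_Icc] at hk; omega
        rw [Multiset.mem_toFinset] at hk2
        simp [cycleCount, this, Multiset.count_eq_zero_of_notMem hk2]
    rw [key]
    have := Finset.sum_multiset_map_count σ.cycleType (id : ℕ → ℕ)
    simp only [Multiset.map_id', smul_eq_mul, id] at this ⊢
    rw [← this, Equiv.Perm.sum_cycleType σ]
  have hins : Finset.Icc 1 N = insert 1 (Finset.Icc 2 N) := by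
    ext k; simp only [Finset.mem_Icc, Finset.mem_insert]; omega
  rw [hins, Finset.sum_insert (by simp)]
  omega

open scoped Classical in
/-- If `‖μ‖ = N`, then `binom(X,μ)` is the indicator function of the conjugacy class `C_μ`
of permutations with exactly `μ k` many `k`-cycles for every `k ≥ 1`. -/
theorem stmt1 (N : ℕ) (μ : ℕ →₀ ℕ) (h0 : μ 0 = 0)
    (hμ : (μ.sum fun k m => k * m) = N) (σ : Equiv.Perm (Fin N)) :
    (∏ k ∈ μ.support, (cycleCount σ k).choose (μ k))
      = if (∀ k, 1 ≤ k → cycleCount σ k = μ k) then 1 else 0 := by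

  have hμsub : μ.support ⊆ Finset.Icc 1 N := by
    intro k hk
    have hk0 : μ k ≠ 0 := Finsupp.mem_support_iff.mp hk
    have hk1 : k ≠ 0 := fun h => hk0 (h ▸ h0)
    have hle : k * μ k ≤ N := by
      rw [← hμ, Finsupp.sum]
      exact Finset.single_le_sum (f := fun i => i * μ i) (fun i _ => Nat.zero_le _) hk
    have : k ≤ k * μ k := Nat.le_mul_of_pos_right k (by omega)
    exact Finset.mem_Icc.mpr ⟨by omega, by omega⟩
  have hμN : ∑ k ∈ Finset.Icc 1 N, k * μ k = N := by
    have h1 : ∑ k ∈ μ.support, k * μ k = ∑ k ∈ Finset.Icc 1 N, k * μ k :=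
      Finset.sum_subset hμsub (fun k _ hk => by
        simp [Finsupp.notMem_support_iff.mp hk])
    rw [← h1, ← hμ, Finsupp.sum]
  by_cases h : ∀ k, 1 ≤ k → cycleCount σ k = μ k
  · rw [if_pos h]
    apply Finset.prod_eq_one
    intro k hk
    have hk1 : 1 ≤ k := (Finset.mem_Icc.mp (hμsub hk)).1
    rw [h k hk1, Nat.choose_self]
  · rw [if_neg h]
    by_contra hne
    apply h
    have hfac : ∀ k ∈ μ.support, μ k ≤ cycleCount σ k := by
      intro k hk
      by_contra hlt
      push_neg at hlt
      exact hne (Finset.prod_eq_zero hk (Nat.choose_eq_zero_of_lt hlt))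
    have hle : ∀ k ∈ Finset.Icc 1 N, k * μ k ≤ k * cycleCount σ k := by
      intro k hk
      by_cases hks : k ∈ μ.support
      · exact Nat.mul_le_mul_left k (hfac k hks)
      · simp [Finsupp.notMem_support_iff.mp hks]
    have heq := (Finset.sum_eq_sum_iff_of_le hle).mp (by rw [hμN, cycleCount_sum])
    intro k hk1
    by_cases hkN : k ≤ N
    · have h2 := heq k (Finset.mem_Icc.mpr ⟨hk1, hkN⟩)
      exact (Nat.eq_of_mul_eq_mul_left (by omega) h2.symm)
    · have hz : μ k = 0 := Finsupp.notMem_support_iff.mp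
        (fun hm => hkN (Finset.mem_Icc.mp (hμsub hm)).2)
      rw [hz, cycleCount_le N σ hk1 (by omega)]
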